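/- arXiv:2312.11696 — 2 statements merged into one kernel-verified Lean document; each statement's English description precedes it below -/
import Mathlib

section
/- Let m ∈ ℕ₀ and let 0 ≤ a < F^m have Zeckendorf digits d_1 = d_0 = 0. Then the interval I_0(a;m) has length φ^(−m), the interval I_1(a;m) has length φ^(−m−1), and, when it exists (i.e., when a+3 ≤ F^m and also d_2 = 0), the interval I_2(a;m) has length φ^(−m). -/
open Finset

/-- `F m` denotes `F^m := F_{m+2}`, the Fibonacci numbers with shifted index,
so `F^{-2} = 0`, `F^{-1} = 1`, `F^0 = 1`, `F^1 = 2`, … (and `F^m = 0` for `m < -2`). -/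
def F (m : ℤ) : ℕ := Nat.fib (m + 2).toNat

lemma F_pos (m : ℤ) (h : -2 < m) : 0 < F m := Nat.fib_pos.mpr (by omega)

/-- The set of indices of the `1` digits in the (unique) Zeckendorf representation
`n = ∑_{j ∈ zeckSet n} F^j` (no two consecutive indices), computed greedily. -/
def zeckSet : ℕ → Finset ℕ
  | 0 => ∅
  | (n + 1) =>
      insert (Nat.findGreatest (fun i => F i ≤ n + 1) (n + 1))
        (zeckSet (n + 1 - F (Nat.findGreatest (fun i => F i ≤ n + 1) (n + 1))))
decreasing_by exact Nat.sub_lt (Nat.succ_pos n) (F_pos _ (by omega))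

/-- The golden ratio `φ = (1 + √5)/2`. -/
noncomputable def phi : ℝ := (1 + Real.sqrt 5) / 2

/-- `|n|`, the zeroth Zeckendorf digit of `n`. -/
def zd0 (n : ℕ) : ℕ := if 0 ∈ zeckSet n then 1 else 0

/-- `n‾ = ∑_j d_j φ^j`, the `n`-th whole number in base `φ`. -/
noncomputable def zbar (n : ℕ) : ℝ := ∑ j ∈ zeckSet n, phi ^ j

/-- `n ⊙ φ^k = ∑_j d_j F^{j+k}`, the Zeckendorf digit shift. -/
def zshift (n : ℕ) (k : ℤ) : ℕ := ∑ j ∈ zeckSet n, F (j + k)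

/-- ℕ-indexed version of `F`. -/
def Ff (j : ℕ) : ℕ := Nat.fib (j + 2)

lemma F_eq (j : ℕ) : F (j : ℤ) = Ff j := by
  simp [F, Ff]; norm_cast

lemma Ff_pos (j : ℕ) : 0 < Ff j := Nat.fib_pos.mpr (by omega)

lemma Ff_mono {i j : ℕ} (h : i ≤ j) : Ff i ≤ Ff j := Nat.fib_mono (by omega)

lemma Ff_add_two (j : ℕ) : Ff (j + 2) = Ff (j + 1) + Ff j := by
  show Nat.fib (j + 2 + 2) = Nat.fib (j + 1 + 2) + Nat.fib (j + 2)
  rw [Nat.fib_add_two]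
  have h : j + 2 + 1 = j + 1 + 2 := by omega
  rw [h]
  omega

lemma Ff_ge (j : ℕ) : j + 1 ≤ Ff j := by
  induction j with
  | zero => decide
  | succ m ih =>
    have h : Ff m < Ff (m + 1) := by
      show Nat.fib (m + 2) < Nat.fib (m + 2 + 1)
      exact Nat.fib_lt_fib_succ (by omega)
    omega

lemma Ff_lt_iff {i j : ℕ} : Ff i < Ff j ↔ i < j := by
  constructor
  · intro h
    by_contra hc
    push_neg at hc
    have := Ff_mono hc
    omega
  · intro h
    have h1 : Ff i < Ff (i + 1) := by
      show Nat.fib (i+2) < Nat.fib (i+1+2)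
      exact Nat.fib_lt_fib_succ (by omega)
    have h2 : Ff (i+1) ≤ Ff j := Ff_mono (by omega)
    omega

/-- admissibility: no two consecutive indices -/
def Adm (S : Finset ℕ) : Prop := ∀ i ∈ S, i + 1 ∉ S

lemma Adm_subset {S T : Finset ℕ} (h : T ⊆ S) (hS : Adm S) : Adm T :=
  fun i hi hi1 => hS i (h hi) (h hi1)

lemma zeck_spec (n : ℕ) : (∑ i ∈ zeckSet n, Ff i = n) ∧ (∀ i ∈ zeckSet n, Ff i ≤ n) ∧
    Adm (zeckSet n) := by
  induction n using Nat.strong_induction_on with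
  | _ n ih =>
  match n with
  | 0 => exact ⟨by simp [zeckSet], by simp [zeckSet], by simp [Adm, zeckSet]⟩
  | (n+1) =>
    set g := Nat.findGreatest (fun i => F i ≤ n + 1) (n + 1) with hgdef
    have hg1 : Ff g ≤ n + 1 := by
      have h := Nat.findGreatest_spec (P := fun i => F (i:ℤ) ≤ n + 1) (Nat.zero_le (n+1))
        (by simp only [F_eq]; exact le_trans (by decide) (Nat.le_add_left 1 n))
      simp only [F_eq] at h
      exact h
    have hgn : g ≤ n := by
      have := Ff_ge g
      omega
    have hg2 : n + 1 < Ff (g + 1) := by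
      have h := Nat.findGreatest_is_greatest (P := fun i => F (i:ℤ) ≤ n + 1)
        (k := g + 1) (Nat.lt_succ_self g) (by omega)
      simp only [F_eq] at h
      omega
    have heq : zeckSet (n+1) = insert g (zeckSet (n + 1 - Ff g)) := by
      rw [zeckSet, ← hgdef, F_eq]
    set r := n + 1 - Ff g with hrdef
    have hr : r < n + 1 := by have := Ff_pos g; omega
    clear_value r
    clear_value g
    clear hgdef
    obtain ⟨hsum, hle, hadm⟩ := ih r hr
    have hsmall : ∀ i ∈ zeckSet r, i + 2 ≤ g := by
      intro i hi
      have h1 : Ff i ≤ r := hle i hi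
      rcases Nat.eq_zero_or_pos g with h | h
      · exfalso
        subst h
        have h2 : Ff 1 = 2 := by decide
        have h3 : Ff 0 = 1 := by decide
        simp only [Nat.zero_add] at hg2
        have hr0 : r = 0 := by omega
        rw [hr0] at hi
        simp [zeckSet] at hi
      · obtain ⟨k, rfl⟩ : ∃ k, g = k + 1 := ⟨g - 1, by omega⟩
        have hadd : Ff (k+2) = Ff (k+1) + Ff k := Ff_add_two k
        have hg2' : n + 1 < Ff (k + 2) := hg2
        have h4 : Ff i < Ff k := by omega
        have := Ff_lt_iff.mp h4
        omega
    have hgnot : g ∉ zeckSet r := fun h => by have := hsmall g h; omega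
    refine ⟨?_, ?_, ?_⟩
    · rw [heq, Finset.sum_insert hgnot, hsum]; omega
    · rw [heq]; intro i hi
      rcases Finset.mem_insert.mp hi with h | h
      · rw [h]; exact hg1
      · have := hle i h; omega
    · rw [heq]; intro i hi hi1
      rcases Finset.mem_insert.mp hi with h | h
      · subst h
        rcases Finset.mem_insert.mp hi1 with h' | h'
        · omega
        · have := hsmall _ h'; omega
      · rcases Finset.mem_insert.mp hi1 with h' | h'
        · have := hsmall _ h; omega
        · exact hadm i h h'

lemma sum_lt_of_adm : ∀ (g : ℕ) (S : Finset ℕ), Adm S → (∀ i ∈ S, i ≤ g) →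
    ∑ i ∈ S, Ff i < Ff (g + 1) := by
  intro g
  induction g using Nat.strong_induction_on with
  | _ g ih =>
  intro S hA hbd
  by_cases hg : g ∈ S
  · match g, ih, hbd, hg with
    | 0, ih, hbd, hg =>
      have hS : S = {0} := Finset.eq_singleton_iff_unique_mem.mpr
        ⟨hg, fun x hx => by have := hbd x hx; omega⟩
      rw [hS]; decide
    | 1, ih, hbd, hg =>
      have h0 : 0 ∉ S := fun h => hA 0 h hg
      have hS : S = {1} := Finset.eq_singleton_iff_unique_mem.mpr
        ⟨hg, fun x hx => by
          have := hbd x hx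
          interval_cases x
          · exact absurd hx h0
          · rfl⟩
      rw [hS]; decide
    | (k+2), ih, hbd, hg =>
      have hk : k + 1 ∉ S := fun hk => hA (k+1) hk hg
      set T := S.erase (k+2) with hT
      have hTbd : ∀ i ∈ T, i ≤ k := by
        intro i hi
        have h1 := Finset.mem_of_mem_erase hi
        have h2 := Finset.ne_of_mem_erase hi
        have h3 := hbd i h1
        have h4 : i ≠ k + 1 := fun h => hk (h ▸ h1)
        omega
      have hTadm : Adm T := Adm_subset (Finset.erase_subset _ _) hA
      have hTsum : ∑ i ∈ T, Ff i < Ff (k + 1) := ih k (by omega) T hTadm hTbd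
      have hS : S = insert (k+2) T := by rw [hT, Finset.insert_erase hg]
      rw [hS, Finset.sum_insert (Finset.notMem_erase _ _), ← hT]
      have hadd : Ff (k+3) = Ff (k+2) + Ff (k+1) := Ff_add_two (k+1)
      show Ff (k + 2) + ∑ i ∈ T, Ff i < Ff (k + 3)
      omega
  · match g, ih, hbd, hg with
    | 0, ih, hbd, hg =>
      have hS : S = ∅ := Finset.eq_empty_iff_forall_notMem.mpr
        (fun x hx => by have := hbd x hx; interval_cases x; exact hg hx)
      rw [hS]; simpa using Ff_pos 1
    | (k+1), ih, hbd, hg =>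
      have h1 : ∑ i ∈ S, Ff i < Ff (k + 1) := by
        apply ih k (by omega) S hA
        intro i hi
        have h2 := hbd i hi
        have h3 : i ≠ k + 1 := fun h => hg (h ▸ hi)
        omega
      have h2 : Ff (k+1) ≤ Ff (k+2) := Ff_mono (by omega)
      show ∑ i ∈ S, Ff i < Ff (k + 2)
      omega

lemma zeck_unique : ∀ (n : ℕ) (S T : Finset ℕ), Adm S → Adm T →
    ∑ i ∈ S, Ff i = n → ∑ i ∈ T, Ff i = n → S = T := by
  intro n
  induction n using Nat.strong_induction_on with
  | _ n ih =>
  intro S T hS hT hSn hTn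
  rcases Nat.eq_zero_or_pos n with h | h
  · subst h
    have e1 : S = ∅ := by
      by_contra hc
      obtain ⟨x, hx⟩ := Finset.nonempty_iff_ne_empty.mpr hc
      have h1 : Ff x ≤ ∑ i ∈ S, Ff i := Finset.single_le_sum (fun i _ => Nat.zero_le _) hx
      have := Ff_pos x
      omega
    have e2 : T = ∅ := by
      by_contra hc
      obtain ⟨x, hx⟩ := Finset.nonempty_iff_ne_empty.mpr hc
      have h1 : Ff x ≤ ∑ i ∈ T, Ff i := Finset.single_le_sum (fun i _ => Nat.zero_le _) hx
      have := Ff_pos x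
      omega
    rw [e1, e2]
  · have hSne : S.Nonempty := by
      by_contra hc
      rw [Finset.not_nonempty_iff_eq_empty.mp hc] at hSn
      simp at hSn; omega
    have hTne : T.Nonempty := by
      by_contra hc
      rw [Finset.not_nonempty_iff_eq_empty.mp hc] at hTn
      simp at hTn; omega
    set g := S.max' hSne with hgdef
    set k := T.max' hTne with hkdef
    have hgS : g ∈ S := S.max'_mem hSne
    have hkT : k ∈ T := T.max'_mem hTne
    have hgle : Ff g ≤ n := by
      have h1 : Ff g ≤ ∑ i ∈ S, Ff i := Finset.single_le_sum (fun i _ => Nat.zero_le _) hgS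
      omega
    have hkle : Ff k ≤ n := by
      have h1 : Ff k ≤ ∑ i ∈ T, Ff i := Finset.single_le_sum (fun i _ => Nat.zero_le _) hkT
      omega
    have hglt : n < Ff (g+1) := by
      have h1 : ∑ i ∈ S, Ff i < Ff (g + 1) := sum_lt_of_adm g S hS (fun i hi => S.le_max' i hi)
      omega
    have hklt : n < Ff (k+1) := by
      have h1 : ∑ i ∈ T, Ff i < Ff (k + 1) := sum_lt_of_adm k T hT (fun i hi => T.le_max' i hi)
      omega
    clear_value g
    clear_value k
    clear hgdef hkdef
    have hgk : g = k := by
      by_contra hc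
      rcases Nat.lt_or_ge g k with h' | h'
      · have h1 : Ff k < Ff (g+1) := by omega
        have := Ff_lt_iff.mp h1; omega
      · have h1 : Ff g < Ff (k+1) := by omega
        have := Ff_lt_iff.mp h1; omega
    subst hgk
    have hrec : S.erase g = T.erase g := by
      apply ih (n - Ff g) (by have := Ff_pos g; omega)
      · exact Adm_subset (Finset.erase_subset _ _) hS
      · exact Adm_subset (Finset.erase_subset _ _) hT
      · have h1 : ∑ i ∈ S.erase g, Ff i + Ff g = ∑ i ∈ S, Ff i :=
          Finset.sum_erase_add S Ff hgS
        omega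
      · have h1 : ∑ i ∈ T.erase g, Ff i + Ff g = ∑ i ∈ T, Ff i :=
          Finset.sum_erase_add T Ff hkT
        omega
    have h2 : insert g (S.erase g) = insert g (T.erase g) := by rw [hrec]
    rwa [Finset.insert_erase hgS, Finset.insert_erase hkT] at h2

-- phi facts
lemma phi_pos : 0 < phi := by
  have := Real.sqrt_nonneg 5
  rw [phi]; linarith

lemma phi_sq : phi ^ 2 = phi + 1 := by
  have h : Real.sqrt 5 ^ 2 = 5 := Real.sq_sqrt (by norm_num)
  rw [phi]; nlinarith [h]

lemma phi_pow_add_two (j : ℕ) : phi ^ (j+2) = phi ^ (j+1) + phi ^ j := by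
  have h : phi ^ (j+2) = phi ^ j * phi ^ 2 := by ring
  rw [h, phi_sq]; ring

/-- Key lemma: adding `Ff j` to `n` whose Zeckendorf digits are all ≥ j+1 adds `φ^j`. -/
lemma zbar_add_F : ∀ (n : ℕ) (j : ℕ), (∀ i ∈ zeckSet n, j + 1 ≤ i) →
    zbar (n + Ff j) = zbar n + phi ^ j := by
  intro n
  induction n using Nat.strong_induction_on with
  | _ n ih =>
  intro j hbig
  obtain ⟨hsum, hle, hadm⟩ := zeck_spec n
  by_cases hmem : j + 1 ∈ zeckSet n
  · -- carry case
    set T := (zeckSet n).erase (j+1) with hT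
    have hFle : Ff (j+1) ≤ n := hle _ hmem
    have hTsum : ∑ i ∈ T, Ff i = n - Ff (j+1) := by
      have h : ∑ i ∈ T, Ff i + Ff (j+1) = ∑ i ∈ zeckSet n, Ff i :=
        Finset.sum_erase_add (zeckSet n) Ff hmem
      omega
    have hTbig : ∀ i ∈ T, j + 3 ≤ i := by
      intro i hi
      have h1 := Finset.mem_of_mem_erase hi
      have h2 := Finset.ne_of_mem_erase hi
      have h3 := hbig i h1
      have h4 : i ≠ j + 2 := fun h => hadm (j+1) hmem (h ▸ h1)
      omega
    set n' := n - Ff (j+1) with hn'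
    have hn'lt : n' < n := by have := Ff_pos (j+1); omega
    obtain ⟨hsum', _, hadm'⟩ := zeck_spec n'
    have hTadm : Adm T := Adm_subset (Finset.erase_subset _ _) hadm
    have hTeq : zeckSet n' = T := zeck_unique n' _ _ hadm' hTadm hsum' hTsum
    have hzn : zbar n = zbar n' + phi ^ (j+1) := by
      rw [zbar, zbar, hTeq, hT]
      rw [← Finset.sum_erase_add (zeckSet n) (fun i => phi ^ i) hmem]
    have harith : n + Ff j = n' + Ff (j+2) := by
      have := Ff_add_two j
      omega
    have hIH : zbar (n' + Ff (j+2)) = zbar n' + phi ^ (j+2) := by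
      apply ih n' hn'lt (j+2)
      intro i hi
      rw [hTeq] at hi
      exact hTbig i hi
    rw [harith, hIH, hzn, phi_pow_add_two]
    ring
  · -- no carry
    have hbig2 : ∀ i ∈ zeckSet n, j + 2 ≤ i := by
      intro i hi
      have h1 := hbig i hi
      have h2 : i ≠ j + 1 := fun h => hmem (h ▸ hi)
      omega
    have hjnot : j ∉ zeckSet n := fun h => by have := hbig j h; omega
    have hadm2 : Adm (insert j (zeckSet n)) := by
      intro i hi hi1
      rcases Finset.mem_insert.mp hi with h | h
      · subst h
        rcases Finset.mem_insert.mp hi1 with h' | h'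
        · omega
        · have := hbig2 _ h'; omega
      · rcases Finset.mem_insert.mp hi1 with h' | h'
        · have := hbig2 _ h; omega
        · exact hadm i h h'
    have hsum2 : ∑ i ∈ insert j (zeckSet n), Ff i = n + Ff j := by
      rw [Finset.sum_insert hjnot, hsum]; omega
    obtain ⟨hsum3, _, hadm3⟩ := zeck_spec (n + Ff j)
    have heq : zeckSet (n + Ff j) = insert j (zeckSet n) :=
      zeck_unique (n + Ff j) _ _ hadm3 hadm2 hsum3 hsum2
    rw [zbar, heq, Finset.sum_insert hjnot, zbar]
    ring

lemma Ff0 : Ff 0 = 1 := by decide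
lemma Ff1 : Ff 1 = 2 := by decide
lemma Ff2 : Ff 2 = 3 := by decide

theorem statement3' (m a : ℕ)
    (h0 : 0 ∉ zeckSet a) (h1 : 1 ∉ zeckSet a) :
    (zbar (a + 1) / phi ^ m - zbar a / phi ^ m = phi ^ (-(m : ℤ))) ∧
    (zbar (a + 2) / phi ^ m - zbar (a + 1) / phi ^ m = phi ^ (-(m : ℤ) - 1)) ∧
    (2 ∉ zeckSet a →
      zbar (a + 3) / phi ^ m - zbar (a + 2) / phi ^ m = phi ^ (-(m : ℤ))) := by
  have e0 : zbar (a + 1) = zbar a + 1 := by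
    have h := zbar_add_F a 0 (fun i hi => by
      have hne : i ≠ 0 := fun h => h0 (h ▸ hi)
      omega)
    rw [Ff0] at h
    simpa using h
  have e1 : zbar (a + 2) = zbar a + phi := by
    have h := zbar_add_F a 1 (fun i hi => by
      have hne : i ≠ 0 := fun h => h0 (h ▸ hi)
      have hne1 : i ≠ 1 := fun h => h1 (h ▸ hi)
      omega)
    rw [Ff1] at h
    simpa using h
  have hp : (0:ℝ) < phi ^ m := pow_pos phi_pos m
  have hzpow : phi ^ (-(m:ℤ)) = (phi ^ m)⁻¹ := by
    rw [zpow_neg, zpow_natCast]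
  have hzpow2 : phi ^ (-(m:ℤ) - 1) = (phi ^ m * phi)⁻¹ := by
    rw [show -(m:ℤ) - 1 = -((m:ℤ) + 1) by ring, zpow_neg, zpow_add₀ (ne_of_gt phi_pos),
      zpow_natCast, zpow_one]
  have hphi := phi_pos
  have hsq := phi_sq
  refine ⟨?_, ?_, ?_⟩
  · rw [e0, hzpow]
    field_simp
    ring
  · rw [e1, e0, hzpow2]
    rw [div_sub_div_same]
    have hnum : zbar a + phi - (zbar a + 1) = phi - 1 := by ring
    rw [hnum]
    rw [div_eq_iff (ne_of_gt hp), mul_inv]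
    have hphine : phi ≠ 0 := ne_of_gt hphi
    have hpne : phi ^ m ≠ 0 := ne_of_gt hp
    field_simp
    nlinarith [hsq]
  · intro h2
    have e2 : zbar (a + 3) = zbar a + phi ^ 2 := by
      have h := zbar_add_F a 2 (fun i hi => by
        have hne : i ≠ 0 := fun h => h0 (h ▸ hi)
        have hne1 : i ≠ 1 := fun h => h1 (h ▸ hi)
        have hne2 : i ≠ 2 := fun h => h2 (h ▸ hi)
        omega)
      rw [Ff2] at h
      simpa using h
    rw [e2, e1, hzpow, div_sub_div_same]
    have hnum : zbar a + phi ^ 2 - (zbar a + phi) = 1 := by nlinarith [hsq]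
    rw [hnum]
    exact one_div _

/-- Lengths of the elementary intervals `I_i(a;m)` for `a < F^m`
with Zeckendorf digits `d_1 = d_0 = 0`: `I_0(a;m)` has length `φ^(−m)`, `I_1(a;m)` has
length `φ^(−m−1)`, and (when it exists, i.e. `a+3 ≤ F^m` and `d_2 = 0`) `I_2(a;m)` has
length `φ^(−m)`. -/
theorem statement3 (m a : ℕ) (ha : a < F m)
    (h0 : 0 ∉ zeckSet a) (h1 : 1 ∉ zeckSet a) :
    (zbar (a + 1) / phi ^ m - zbar a / phi ^ m = phi ^ (-(m : ℤ))) ∧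
    (zbar (a + 2) / phi ^ m - zbar (a + 1) / phi ^ m = phi ^ (-(m : ℤ) - 1)) ∧
    (a + 3 ≤ F m → 2 ∉ zeckSet a →
      zbar (a + 3) / phi ^ m - zbar (a + 2) / phi ^ m = phi ^ (-(m : ℤ))) := by
  obtain ⟨g1, g2, g3⟩ := statement3' m a h0 h1
  exact ⟨g1, g2, fun _ h2 => g3 h2⟩
end

section
/- Let s ≥ 1 and m ≥ 0 be integers and let (m_1,...,m_s) ∈ ℕ₀^s satisfy m_1 + ... + m_s + #{j : m_j > 0} ≤ m + 2. Then the sum over all tuples (a_1,...,a_s) with 0 ≤ a_j < F^{m_j} of F^(m − Σ_j (m_j + |a_j|)) equals F^m; that is, F^m = Σ_{I ∈ 𝒫_𝐦} F^(m−|I|) where the sum runs over all elementary intervals I of the (m_1,...,m_s)-partition. -/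
open Finset

lemma F_nat (k : ℕ) : F k = Nat.fib (k + 2) := by
  unfold F; congr 1

lemma F_mono {a b : ℕ} (h : a ≤ b) : F a ≤ F b := by
  rw [F_nat, F_nat]; exact Nat.fib_mono (by omega)

lemma lt_F (k : ℕ) : k < F k := by
  induction k with
  | zero => rw [F_nat]; decide
  | succ k ih =>
      rw [F_nat] at ih ⊢
      have h : Nat.fib (k+1+2) = Nat.fib (k+1) + Nat.fib (k+2) := Nat.fib_add_two
      have h1 : 1 ≤ Nat.fib (k+1) := Nat.fib_pos.mpr (by omega)
      omega

lemma zeckSet_zero : zeckSet 0 = ∅ := by rw [zeckSet]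

lemma zeckSet_step {k n : ℕ} (h1 : F k ≤ n) (h2 : n < F ((k:ℤ)+1)) :
    zeckSet n = insert k (zeckSet (n - F k)) := by
  have h2' : n < F ((k+1:ℕ) : ℤ) := by rwa [show ((k+1:ℕ):ℤ) = (k:ℤ)+1 by push_cast; ring]
  have hn : 1 ≤ n := le_trans (F_pos k (by omega)) h1
  obtain ⟨n', rfl⟩ : ∃ n', n = n' + 1 := ⟨n - 1, by omega⟩
  rw [zeckSet]
  have hg : Nat.findGreatest (fun i => F i ≤ n' + 1) (n' + 1) = k := by
    rw [Nat.findGreatest_eq_iff]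
    refine ⟨by have := lt_F k; omega, fun _ => h1, fun j hj hj' hPj => ?_⟩
    have hPj : F j ≤ n' + 1 := hPj
    have : F ((k+1:ℕ):ℤ) ≤ F (j:ℤ) := F_mono hj
    omega
  rw [hg]

lemma zd0_zero : zd0 0 = 0 := by simp [zd0, zeckSet_zero]

lemma zd0_one : zd0 1 = 1 := by
  have h : zeckSet 1 = insert 0 (zeckSet (1 - F (0:ℕ))) := by
    have e0 : F ((0:ℕ):ℤ) = 1 := by rw [F_nat]; decide
    have e1 : F ((1:ℕ):ℤ) = 2 := by rw [F_nat]; decide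
    apply zeckSet_step
    · omega
    · norm_num [F]; decide
  simp [zd0, h]

lemma zd0_le (n : ℕ) : zd0 n ≤ 1 := by unfold zd0; split <;> omega

lemma F_recN (m : ℕ) : F ((m+2:ℕ)) = F ((m+1:ℕ)) + F (m:ℕ) := by
  rw [F_nat, F_nat, F_nat]
  have h5 : Nat.fib (m+2+2) = Nat.fib (m+2) + Nat.fib (m+2+1) := Nat.fib_add_two
  have h4 : Nat.fib (m+1+2) = Nat.fib (m+1) + Nat.fib (m+1+1) := Nat.fib_add_two
  have h6 : Nat.fib (m+2+1) = Nat.fib (m+1+2) := rfl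
  have h3 : Nat.fib (m+1+1) = Nat.fib (m+2) := rfl
  omega

lemma F_recZ (M : ℤ) (h : 0 ≤ M) : F M = F (M-1) + F (M-2) := by
  unfold F
  have e2 : (M+2).toNat = M.toNat + 2 := by omega
  have e1 : (M-1+2).toNat = M.toNat + 1 := by omega
  have e0 : (M-2+2).toNat = M.toNat := by omega
  rw [e2, e1, e0, Nat.fib_add_two]; omega

lemma zd0_shift {m i : ℕ} (hi : i < F (m:ℕ)) : zd0 (F (m+1:ℕ) + i) = zd0 i := by
  have hstep : zeckSet (F (m+1:ℕ) + i) = insert (m+1) (zeckSet (F (m+1:ℕ) + i - F (m+1:ℕ))) := by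
    apply zeckSet_step
    · omega
    · rw [show ((m+1:ℕ):ℤ)+1 = ((m+2:ℕ):ℤ) by push_cast; ring]
      have := F_recN m; omega
  rw [Nat.add_sub_cancel_left] at hstep
  unfold zd0
  rw [hstep]
  simp

lemma oneDim (m : ℕ) (M : ℤ)
    (h : (m:ℤ) + (if 0 < m then 1 else 0) ≤ M + 2) :
    ∑ a ∈ range (F (m:ℕ)), F (M - (m:ℤ) - (zd0 a : ℤ)) = F M := by
  induction m using Nat.strong_induction_on generalizing M with
  | _ m ih =>
    rcases m with _ | _ | m
    · rw [show F ((0:ℕ):ℤ) = 1 by rw [F_nat]; decide]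
      simp [zd0_zero]
    · rw [show F ((1:ℕ):ℤ) = 2 by rw [F_nat]; decide]
      rw [Finset.sum_range_succ, Finset.sum_range_succ, Finset.sum_range_zero,
        zd0_zero, zd0_one]
      simp only [Nat.cast_zero, Nat.cast_one] at h ⊢
      rw [F_recZ M (by simp at h; omega)]
      ring_nf
    · have hrec := F_recN m
      have hFle : F ((m+1:ℕ)) ≤ F ((m+2:ℕ)) := F_mono (by omega)
      rw [Finset.range_eq_Ico, ← Finset.sum_Ico_consecutive _ (Nat.zero_le (F (m+1:ℕ))) hFle,
        ← Finset.range_eq_Ico]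
      have hfirst : ∑ a ∈ range (F (m+1:ℕ)), F (M - ((m+2:ℕ):ℤ) - (zd0 a : ℤ))
          = F (M - 1) := by
        have := ih (m+1) (by omega) (M - 1) (by push_cast at h ⊢; omega)
        rw [← this]
        apply Finset.sum_congr rfl
        intro a _; congr 1; push_cast; ring
      have hsecond : ∑ a ∈ Finset.Ico (F (m+1:ℕ)) (F (m+2:ℕ)), F (M - ((m+2:ℕ):ℤ) - (zd0 a : ℤ))
          = F (M - 2) := by
        rw [Finset.sum_Ico_eq_sum_range]
        have hlen : F ((m+2:ℕ)) - F ((m+1:ℕ)) = F (m:ℕ) := by omega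
        rw [hlen]
        have := ih m (by omega) (M - 2) (by push_cast at h ⊢; split at h <;> split <;> omega)
        rw [← this]
        apply Finset.sum_congr rfl
        intro i hi
        rw [zd0_shift (Finset.mem_range.mp hi)]
        congr 1; push_cast; ring
      rw [hfirst, hsecond, ← F_recZ M (by push_cast at h; omega)]

lemma sum_piFinset_cons {n : ℕ} (t : Fin (n+1) → Finset ℕ) (f : (Fin (n+1) → ℕ) → ℕ) :
    ∑ a ∈ Fintype.piFinset t, f a
      = ∑ x ∈ t 0, ∑ b ∈ Fintype.piFinset (fun i : Fin n => t i.succ), f (Fin.cons x b) := by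
  rw [← Finset.sum_product']
  refine (Finset.sum_nbij' (fun p => Fin.cons p.1 p.2) (fun a => (a 0, Fin.tail a))
    ?_ ?_ ?_ ?_ ?_).symm
  · intro p hp
    simp only [Finset.mem_product, Fintype.mem_piFinset] at hp ⊢
    intro i
    refine Fin.cases ?_ ?_ i
    · simpa using hp.1
    · intro j; simpa using hp.2 j
  · intro a ha
    simp only [Fintype.mem_piFinset] at ha
    simp only [Finset.mem_product, Fintype.mem_piFinset]
    exact ⟨ha 0, fun j => ha j.succ⟩
  · intro p hp; simp [Fin.tail_cons]
  · intro a ha; simp [Fin.cons_self_tail]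
  · intro p hp; rfl

lemma zd0_bound {m x : ℕ} (hx : x < F (m:ℕ)) : (zd0 x : ℤ) ≤ if 0 < m then 1 else 0 := by
  rcases Nat.eq_zero_or_pos m with hm | hm
  · subst hm
    have hF : F ((0:ℕ):ℤ) = 1 := by rw [F_nat]; decide
    have hx0 : x = 0 := by omega
    simp [hx0, zd0_zero]
  · have := zd0_le x
    simp only [hm, if_pos]
    exact_mod_cast this

lemma statement8_gen (s : ℕ) (mv : Fin s → ℕ) (M : ℤ)
    (h : ((∑ j, (mv j : ℤ)) + ∑ j, (if 0 < mv j then (1:ℤ) else 0)) ≤ M + 2) :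
    (∑ a ∈ Fintype.piFinset (fun j : Fin s => Finset.range (F (mv j))),
        F (M - ∑ j, ((mv j : ℤ) + (zd0 (a j) : ℤ)))) = F M := by
  induction s generalizing M with
  | zero =>
      have hone : Fintype.piFinset (fun j : Fin 0 => Finset.range (F (mv j)))
          = {fun i => i.elim0} := by
        apply Finset.eq_singleton_iff_unique_mem.mpr
        constructor
        · simp only [Fintype.mem_piFinset]
          intro j; exact j.elim0
        · intro a _; funext j; exact j.elim0
      rw [hone, Finset.sum_singleton]
      simp
  | succ n ih =>
      rw [sum_piFinset_cons]
      have hinner : ∀ x ∈ range (F (mv 0)),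
          (∑ b ∈ Fintype.piFinset (fun i : Fin n => range (F (mv i.succ))),
            F (M - ∑ j, ((mv j : ℤ) + (zd0 ((Fin.cons x b : Fin (n+1) → ℕ) j) : ℤ))))
          = F (M - (mv 0 : ℤ) - (zd0 x : ℤ)) := by
        intro x hx
        have hxb := zd0_bound (Finset.mem_range.mp hx)
        have hcond : ((∑ j : Fin n, ((mv j.succ) : ℤ))
            + ∑ j : Fin n, (if 0 < mv j.succ then (1:ℤ) else 0))
            ≤ (M - (mv 0 : ℤ) - (zd0 x : ℤ)) + 2 := by
          rw [Fin.sum_univ_succ, Fin.sum_univ_succ] at h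
          omega
        have := ih (fun j => mv j.succ) (M - (mv 0 : ℤ) - (zd0 x : ℤ)) hcond
        rw [← this]
        apply Finset.sum_congr rfl
        intro b _
        congr 1
        rw [Fin.sum_univ_succ]
        simp only [Fin.cons_zero, Fin.cons_succ]
        ring
      rw [Finset.sum_congr rfl hinner]
      have hcond0 : ((mv 0 : ℤ)) + (if 0 < mv 0 then (1:ℤ) else 0) ≤ M + 2 := by
        rw [Fin.sum_univ_succ, Fin.sum_univ_succ] at h
        have h1 : (0:ℤ) ≤ ∑ j : Fin n, ((mv j.succ) : ℤ) :=
          Finset.sum_nonneg fun j _ => by positivity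
        have h2 : (0:ℤ) ≤ ∑ j : Fin n, (if 0 < mv j.succ then (1:ℤ) else 0) :=
          Finset.sum_nonneg fun j _ => by split <;> norm_num
        omega
      exact oneDim (mv 0) M hcond0

/-- If `m₁ + ⋯ + m_s + #{j : m_j > 0} ≤ m + 2`, then
`F^m = ∑_{I ∈ 𝒫_𝐦} F^(m−|I|)`, the sum running over all elementary intervals of the
`(m₁,…,m_s)`-partition, i.e. over all tuples `(a₁,…,a_s)` with `0 ≤ a_j < F^{m_j}`,
with `|I| = ∑_j (m_j + |a_j|)`. -/
theorem statement8 (s : ℕ) (hs : 1 ≤ s) (m : ℕ) (mv : Fin s → ℕ)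
    (h : (∑ j, mv j) + (Finset.univ.filter fun j => 0 < mv j).card ≤ m + 2) :
    (∑ a ∈ Fintype.piFinset (fun j : Fin s => Finset.range (F (mv j))),
        F ((m : ℤ) - ∑ j, ((mv j : ℤ) + (zd0 (a j) : ℤ)))) = F m := by
  apply statement8_gen
  rw [Finset.card_filter] at h
  exact_mod_cast h
end
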